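/- Coefficient recovery for f-polynomials: if P_n = ∑_{k=0}^n α_k φ_k is an f-polynomial built from the recursive-integral system φ_k with base point x₀, then α_k = d_k^f[P_n](x₀)/k! for each 0 ≤ k ≤ n. -/

import Mathlib

/-- The recursive integrals `X̃⁽ⁿ⁾`. -/
noncomputable def Xt (f : ℝ → ℂ) (x₀ : ℝ) : ℕ → ℝ → ℂ
  | 0 => fun _ => 1
  | n + 1 => fun x => (n + 1 : ℂ) * ∫ s in x₀..x, Xt f x₀ n s * (f s ^ 2) ^ ((-1 : ℤ) ^ n)

/-- The recursive integrals `X⁽ⁿ⁾`. -/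
noncomputable def Xr (f : ℝ → ℂ) (x₀ : ℝ) : ℕ → ℝ → ℂ
  | 0 => fun _ => 1
  | n + 1 => fun x => (n + 1 : ℂ) * ∫ s in x₀..x, Xr f x₀ n s * (f s ^ 2) ^ ((-1 : ℤ) ^ (n + 1))

/-- The system `φ_k`. -/
noncomputable def phiSys (f : ℝ → ℂ) (x₀ : ℝ) (k : ℕ) (x : ℝ) : ℂ :=
  if k % 2 = 1 then f x * Xr f x₀ k x else f x * Xt f x₀ k x

/-- The generalized (`f`-) derivatives. -/
noncomputable def dgen (f : ℝ → ℂ) : ℕ → (ℝ → ℂ) → ℝ → ℂ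
  | 0, g => g
  | k + 1, g => fun x =>
      f x ^ ((-1 : ℤ) ^ k) * deriv (fun y => f y ^ ((-1 : ℤ) ^ (k + 1)) * dgen f k g y) x

namespace Stmt14Aux

noncomputable def Zf (f : ℝ → ℂ) (x₀ : ℝ) (m : ℕ) : ℕ → ℝ → ℂ :=
  if m % 2 = 1 then Xr f x₀ else Xt f x₀

variable {f : ℝ → ℂ} {x₀ : ℝ}

lemma Zf_zero (m : ℕ) : Zf f x₀ m 0 = fun _ => 1 := by
  unfold Zf; split <;> rfl

lemma phiSys_eq (m : ℕ) : phiSys f x₀ m = fun x => f x * Zf f x₀ m m x := by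
  funext x
  simp only [phiSys, Zf]
  split <;> rfl

section

variable (hf : Continuous f) (hf0 : ∀ x : ℝ, f x ≠ 0)
include hf hf0

lemma cont_integrand {g : ℝ → ℂ} (hg : Continuous g) (e : ℤ) :
    Continuous fun s => g s * (f s ^ 2) ^ e :=
  hg.mul ((hf.pow 2).zpow₀ e fun a => Or.inl (pow_ne_zero 2 (hf0 a)))

lemma Xt_cont (n : ℕ) : Continuous (Xt f x₀ n) := by
  induction n with
  | zero => exact continuous_const
  | succ n ih =>
    have h := cont_integrand hf hf0 ih ((-1 : ℤ) ^ n)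
    exact continuous_const.mul
      (intervalIntegral.continuous_primitive (fun a b => h.intervalIntegrable a b) x₀)

lemma Xr_cont (n : ℕ) : Continuous (Xr f x₀ n) := by
  induction n with
  | zero => exact continuous_const
  | succ n ih =>
    have h := cont_integrand hf hf0 ih ((-1 : ℤ) ^ (n + 1))
    exact continuous_const.mul
      (intervalIntegral.continuous_primitive (fun a b => h.intervalIntegrable a b) x₀)

lemma primitive_hasDerivAt {g : ℝ → ℂ} (hg : Continuous g) (x : ℝ) :
    HasDerivAt (fun u => ∫ s in x₀..u, g s) (g x) x :=
  intervalIntegral.integral_hasDerivAt_right (hg.intervalIntegrable x₀ x)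
    (hg.stronglyMeasurable.stronglyMeasurableAtFilter) hg.continuousAt

lemma Zf_hasDerivAt (m j : ℕ) (x : ℝ) :
    HasDerivAt (Zf f x₀ m (j + 1))
      ((j + 1 : ℂ) * (Zf f x₀ m j x * (f x ^ 2) ^ ((-1 : ℤ) ^ (j + m)))) x := by
  unfold Zf
  split_ifs with h
  · have hm : (-1 : ℤ) ^ m = -1 := (Nat.odd_iff.mpr h).neg_one_pow
    have he : (-1 : ℤ) ^ (j + m) = (-1) ^ (j + 1) := by
      rw [pow_add, hm, pow_succ]
    rw [he]
    show HasDerivAt (fun x => (j + 1 : ℂ) *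
      ∫ s in x₀..x, Xr f x₀ j s * (f s ^ 2) ^ ((-1 : ℤ) ^ (j + 1))) _ x
    exact (primitive_hasDerivAt hf hf0
      (cont_integrand hf hf0 (Xr_cont hf hf0 j) _) x).const_mul _
  · have hm : (-1 : ℤ) ^ m = 1 := (Nat.even_iff.mpr (by omega)).neg_one_pow
    have he : (-1 : ℤ) ^ (j + m) = (-1) ^ j := by rw [pow_add, hm, mul_one]
    rw [he]
    show HasDerivAt (fun x => (j + 1 : ℂ) *
      ∫ s in x₀..x, Xt f x₀ j s * (f s ^ 2) ^ ((-1 : ℤ) ^ j)) _ x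
    exact (primitive_hasDerivAt hf hf0
      (cont_integrand hf hf0 (Xt_cont hf hf0 j) _) x).const_mul _

lemma zpow_cancel (k : ℕ) (y : ℝ) :
    f y ^ ((-1 : ℤ) ^ (k + 1)) * f y ^ ((-1 : ℤ) ^ k) = 1 := by
  rw [← zpow_add₀ (hf0 y), show (-1 : ℤ) ^ (k + 1) + (-1) ^ k = 0 by rw [pow_succ]; ring,
    zpow_zero]

lemma sq_zpow (k : ℕ) (x : ℝ) :
    ((f x ^ 2 : ℂ)) ^ ((-1 : ℤ) ^ (k + 1)) = f x ^ (2 * (-1 : ℤ) ^ (k + 1)) := by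
  rw [← zpow_natCast (f x) 2, ← zpow_mul]
  norm_num

lemma dgen_phi : ∀ k m, k ≤ m →
    dgen f k (phiSys f x₀ m) = fun x =>
      (m.descFactorial k : ℂ) * (f x ^ ((-1 : ℤ) ^ k) * Zf f x₀ m (m - k) x) := by
  intro k
  induction k with
  | zero =>
    intro m _
    funext x
    simp [dgen, phiSys_eq]
  | succ k ih =>
    intro m hm
    have hk : k ≤ m := by omega
    obtain ⟨j, hj⟩ : ∃ j, m = k + 1 + j := ⟨m - (k + 1), by omega⟩
    funext x
    show f x ^ ((-1 : ℤ) ^ k) *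
      deriv (fun y => f y ^ ((-1 : ℤ) ^ (k + 1)) * dgen f k (phiSys f x₀ m) y) x = _
    have hinner : (fun y => f y ^ ((-1 : ℤ) ^ (k + 1)) * dgen f k (phiSys f x₀ m) y)
        = fun y => (m.descFactorial k : ℂ) * Zf f x₀ m (m - k) y := by
      funext y
      rw [ih m hk]
      calc f y ^ ((-1 : ℤ) ^ (k + 1)) *
            ((m.descFactorial k : ℂ) * (f y ^ ((-1 : ℤ) ^ k) * Zf f x₀ m (m - k) y))
          = (m.descFactorial k : ℂ) *
            ((f y ^ ((-1 : ℤ) ^ (k + 1)) * f y ^ ((-1 : ℤ) ^ k)) * Zf f x₀ m (m - k) y) := by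
            ring
        _ = _ := by rw [zpow_cancel hf hf0, one_mul]
    rw [hinner]
    have hmk : m - k = j + 1 := by omega
    have hD : deriv (fun y => (m.descFactorial k : ℂ) * Zf f x₀ m (m - k) y) x
        = (m.descFactorial k : ℂ) *
          ((j + 1 : ℂ) * (Zf f x₀ m j x * (f x ^ 2) ^ ((-1 : ℤ) ^ (j + m)))) := by
      rw [hmk]
      exact ((Zf_hasDerivAt hf hf0 m j x).const_mul _).deriv
    rw [hD]
    have hexp : ((-1 : ℤ)) ^ (j + m) = (-1) ^ (k + 1) := by
      rw [hj, show j + (k + 1 + j) = 2 * j + (k + 1) by ring, pow_add, pow_mul]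
      norm_num
    have hmk1 : m - (k + 1) = j := by omega
    have hdf : (m.descFactorial (k + 1) : ℂ) = (j + 1 : ℂ) * (m.descFactorial k : ℂ) := by
      rw [Nat.descFactorial_succ, show m - k = j + 1 from hmk]
      push_cast
      ring
    have hcomb : f x ^ ((-1 : ℤ) ^ k) * f x ^ (2 * (-1 : ℤ) ^ (k + 1))
        = f x ^ ((-1 : ℤ) ^ (k + 1)) := by
      rw [← zpow_add₀ (hf0 x)]
      congr 1
      rw [pow_succ]
      ring
    rw [hexp, sq_zpow hf hf0, hmk1, hdf]
    calc f x ^ ((-1 : ℤ) ^ k) * ((m.descFactorial k : ℂ) *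
          ((j + 1 : ℂ) * (Zf f x₀ m j x * f x ^ (2 * (-1 : ℤ) ^ (k + 1)))))
        = (j + 1 : ℂ) * (m.descFactorial k : ℂ) *
          ((f x ^ ((-1 : ℤ) ^ k) * f x ^ (2 * (-1 : ℤ) ^ (k + 1))) * Zf f x₀ m j x) := by ring
      _ = _ := by rw [hcomb]

lemma dgen_phi_gt : ∀ k m, m < k → dgen f k (phiSys f x₀ m) = fun _ => 0 := by
  intro k
  induction k with
  | zero => omega
  | succ k ih =>
    intro m hm
    rcases Nat.lt_or_ge m k with h | h
    · funext x
      show f x ^ ((-1 : ℤ) ^ k) *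
        deriv (fun y => f y ^ ((-1 : ℤ) ^ (k + 1)) * dgen f k (phiSys f x₀ m) y) x = 0
      rw [ih m h]
      simp
    · have hk : m = k := by omega
      subst hk
      funext x
      show f x ^ ((-1 : ℤ) ^ m) *
        deriv (fun y => f y ^ ((-1 : ℤ) ^ (m + 1)) * dgen f m (phiSys f x₀ m) y) x = 0
      have hinner : (fun y => f y ^ ((-1 : ℤ) ^ (m + 1)) * dgen f m (phiSys f x₀ m) y)
          = fun _ => (m.descFactorial m : ℂ) := by
        funext y
        rw [dgen_phi hf hf0 m m le_rfl, Nat.sub_self, Zf_zero]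
        calc f y ^ ((-1 : ℤ) ^ (m + 1)) *
              ((m.descFactorial m : ℂ) * (f y ^ ((-1 : ℤ) ^ m) * 1))
            = (m.descFactorial m : ℂ) *
              (f y ^ ((-1 : ℤ) ^ (m + 1)) * f y ^ ((-1 : ℤ) ^ m)) := by ring
          _ = _ := by rw [zpow_cancel hf hf0, mul_one]
      rw [hinner]
      simp

lemma inner_hasDerivAt (k m : ℕ) (x : ℝ) :
    HasDerivAt (fun y => f y ^ ((-1 : ℤ) ^ (k + 1)) * dgen f k (phiSys f x₀ m) y)
      (f x ^ ((-1 : ℤ) ^ (k + 1)) * dgen f (k + 1) (phiSys f x₀ m) x) x := by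
  rcases Nat.lt_or_ge m k with h | h
  · have h1 := dgen_phi_gt (x₀ := x₀) hf hf0 k m h
    have h2 := dgen_phi_gt (x₀ := x₀) hf hf0 (k + 1) m (by omega)
    rw [h1, h2]
    simpa using hasDerivAt_const x (0 : ℂ)
  · rcases Nat.eq_or_lt_of_le h with h' | h'
    · -- k = m
      subst h'
      have hinner : (fun y => f y ^ ((-1 : ℤ) ^ (k + 1)) * dgen f k (phiSys f x₀ k) y)
          = fun _ => (k.descFactorial k : ℂ) := by
        funext y
        rw [dgen_phi hf hf0 k k le_rfl, Nat.sub_self, Zf_zero]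
        calc f y ^ ((-1 : ℤ) ^ (k + 1)) *
              ((k.descFactorial k : ℂ) * (f y ^ ((-1 : ℤ) ^ k) * 1))
            = (k.descFactorial k : ℂ) *
              (f y ^ ((-1 : ℤ) ^ (k + 1)) * f y ^ ((-1 : ℤ) ^ k)) := by ring
          _ = _ := by rw [zpow_cancel hf hf0, mul_one]
      rw [hinner, dgen_phi_gt hf hf0 (k + 1) k (by omega)]
      simpa using hasDerivAt_const x ((k.descFactorial k : ℂ))
    · -- k < m
      obtain ⟨j, hj⟩ : ∃ j, m = k + 1 + j := ⟨m - (k + 1), by omega⟩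
      have hmk : m - k = j + 1 := by omega
      have hmk1 : m - (k + 1) = j := by omega
      have hinner : (fun y => f y ^ ((-1 : ℤ) ^ (k + 1)) * dgen f k (phiSys f x₀ m) y)
          = fun y => (m.descFactorial k : ℂ) * Zf f x₀ m (j + 1) y := by
        funext y
        rw [dgen_phi hf hf0 k m (by omega), hmk]
        calc f y ^ ((-1 : ℤ) ^ (k + 1)) *
              ((m.descFactorial k : ℂ) * (f y ^ ((-1 : ℤ) ^ k) * Zf f x₀ m (j + 1) y))
            = (m.descFactorial k : ℂ) *
              ((f y ^ ((-1 : ℤ) ^ (k + 1)) * f y ^ ((-1 : ℤ) ^ k)) * Zf f x₀ m (j + 1) y) := by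
              ring
          _ = _ := by rw [zpow_cancel hf hf0, one_mul]
      rw [hinner]
      have hZ := (Zf_hasDerivAt (x₀ := x₀) hf hf0 m j x).const_mul ((m.descFactorial k : ℂ))
      refine hZ.congr_deriv (Eq.symm ?_)
      rw [dgen_phi hf hf0 (k + 1) m (by omega), hmk1]
      have hexp : ((-1 : ℤ)) ^ (j + m) = (-1) ^ (k + 1) := by
        rw [hj, show j + (k + 1 + j) = 2 * j + (k + 1) by ring, pow_add, pow_mul]
        norm_num
      have hdf : (m.descFactorial (k + 1) : ℂ) = (j + 1 : ℂ) * (m.descFactorial k : ℂ) := by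
        rw [Nat.descFactorial_succ, hmk]
        push_cast
        ring
      have hcomb : f x ^ ((-1 : ℤ) ^ (k + 1)) * f x ^ ((-1 : ℤ) ^ (k + 1))
          = f x ^ (2 * (-1 : ℤ) ^ (k + 1)) := by
        rw [← zpow_add₀ (hf0 x)]
        congr 1
        ring
      rw [hexp, sq_zpow hf hf0, hdf]
      calc f x ^ ((-1 : ℤ) ^ (k + 1)) *
            ((j + 1 : ℂ) * (m.descFactorial k : ℂ) *
              (f x ^ ((-1 : ℤ) ^ (k + 1)) * Zf f x₀ m j x))
          = (m.descFactorial k : ℂ) * ((j + 1 : ℂ) *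
            (Zf f x₀ m j x * (f x ^ ((-1 : ℤ) ^ (k + 1)) * f x ^ ((-1 : ℤ) ^ (k + 1))))) := by
            ring
        _ = _ := by rw [hcomb]

lemma dgen_sum (n : ℕ) (α : ℕ → ℂ) : ∀ k : ℕ,
    dgen f k (fun x => ∑ m ∈ Finset.range (n + 1), α m * phiSys f x₀ m x)
      = fun x => ∑ m ∈ Finset.range (n + 1), α m * dgen f k (phiSys f x₀ m) x := by
  intro k
  induction k with
  | zero => rfl
  | succ k ih =>
    funext x
    show f x ^ ((-1 : ℤ) ^ k) * deriv (fun y => f y ^ ((-1 : ℤ) ^ (k + 1)) *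
      dgen f k (fun x => ∑ m ∈ Finset.range (n + 1), α m * phiSys f x₀ m x) y) x = _
    have hinner : (fun y => f y ^ ((-1 : ℤ) ^ (k + 1)) *
          dgen f k (fun x => ∑ m ∈ Finset.range (n + 1), α m * phiSys f x₀ m x) y)
        = fun y => ∑ m ∈ Finset.range (n + 1),
            α m * (f y ^ ((-1 : ℤ) ^ (k + 1)) * dgen f k (phiSys f x₀ m) y) := by
      funext y
      rw [ih]
      rw [Finset.mul_sum]
      exact Finset.sum_congr rfl fun m _ => by ring
    rw [hinner]
    have hsum : HasDerivAt (fun y => ∑ m ∈ Finset.range (n + 1),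
          α m * (f y ^ ((-1 : ℤ) ^ (k + 1)) * dgen f k (phiSys f x₀ m) y))
        (∑ m ∈ Finset.range (n + 1),
          α m * (f x ^ ((-1 : ℤ) ^ (k + 1)) * dgen f (k + 1) (phiSys f x₀ m) x)) x :=
      HasDerivAt.fun_sum fun m _ => (inner_hasDerivAt hf hf0 k m x).const_mul (α m)
    rw [hsum.deriv, Finset.mul_sum]
    refine Finset.sum_congr rfl fun m _ => ?_
    calc f x ^ ((-1 : ℤ) ^ k) *
          (α m * (f x ^ ((-1 : ℤ) ^ (k + 1)) * dgen f (k + 1) (phiSys f x₀ m) x))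
        = α m * ((f x ^ ((-1 : ℤ) ^ (k + 1)) * f x ^ ((-1 : ℤ) ^ k)) *
            dgen f (k + 1) (phiSys f x₀ m) x) := by ring
      _ = _ := by rw [zpow_cancel hf hf0, one_mul]

lemma Zf_succ_base (m j : ℕ) : Zf f x₀ m (j + 1) x₀ = 0 := by
  unfold Zf
  split
  · show (j + 1 : ℂ) * ∫ s in x₀..x₀, _ = 0
    rw [intervalIntegral.integral_same, mul_zero]
  · show (j + 1 : ℂ) * ∫ s in x₀..x₀, _ = 0
    rw [intervalIntegral.integral_same, mul_zero]

end

end Stmt14Aux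

/-- Coefficient recovery for `f`-polynomials: if `P_n = ∑_{k=0}^n α_k φ_k`,
then `α_k = d_k^f[P_n](x₀)/k!` for each `0 ≤ k ≤ n`. -/
theorem stmt_14 (x₀ : ℝ) (n : ℕ) (f : ℝ → ℂ)
    (hf : Continuous f) (hf0 : ∀ x : ℝ, f x ≠ 0) (hf1 : f x₀ = 1)
    (α : ℕ → ℂ) :
    ∀ k ≤ n,
      α k = dgen f k (fun x => ∑ m ∈ Finset.range (n + 1), α m * phiSys f x₀ m x) x₀ /
        (k.factorial : ℂ) := by
  intro k hk
  rw [Stmt14Aux.dgen_sum hf hf0 n α k]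
  beta_reduce
  rw [Finset.sum_eq_single k]
  · rw [Stmt14Aux.dgen_phi hf hf0 k k le_rfl, Nat.sub_self, Stmt14Aux.Zf_zero,
      Nat.descFactorial_self]
    simp only [hf1, one_zpow, mul_one]
    rw [mul_div_assoc, div_self
      (Nat.cast_ne_zero.mpr k.factorial_ne_zero : (k.factorial : ℂ) ≠ 0), mul_one]
  · intro b _ hb
    rcases Nat.lt_or_ge b k with h | h
    · rw [Stmt14Aux.dgen_phi_gt hf hf0 k b h]
      simp
    · have h' : k < b := by omega
      obtain ⟨j, hj⟩ : ∃ j, b - k = j + 1 := ⟨b - k - 1, by omega⟩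
      rw [Stmt14Aux.dgen_phi hf hf0 k b (by omega), hj]
      simp [Stmt14Aux.Zf_succ_base hf hf0]
  · intro h
    exact absurd (Finset.mem_range.mpr (by omega)) h
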